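/- Let ψ, ψ̂ : [x₀, x₁] → ℝ be C² functions with ψ'' − (μ²/ε²) ψ ≥ 0 and ψ̂'' − (μ²/ε²) ψ̂ = 0 on (x₀,x₁), ψ(x₀) = ψ̂(x₀), ψ'(x₁) = ψ̂'(x₁) = 0, and ψ ≥ 0. Then ψ(x) ≤ ψ̂(x) for all x ∈ [x₀, x₁]; in particular ψ(x₁) ≤ ψ(x₀)/cosh(μ(x₁−x₀)/ε). -/

import Mathlib

open Set Real

-- constancy from zero derivative on the interior
lemma const_of_deriv_zero (a b : ℝ) (hab : a ≤ b) (f f' : ℝ → ℝ)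
    (hf : ∀ x, HasDerivAt f (f' x) x) (h0 : ∀ x ∈ Set.Ioo a b, f' x = 0) :
    ∀ x ∈ Set.Icc a b, f x = f b := by
  have hc : ContinuousOn f (Set.Icc a b) :=
    fun x _ => ((hf x).continuousAt).continuousWithinAt
  have hdiff : DifferentiableOn ℝ f (interior (Set.Icc a b)) :=
    fun x _ => ((hf x).differentiableAt).differentiableWithinAt
  have hderiv : ∀ x ∈ Set.Ioo a b, deriv f x = 0 := by
    intro x hxm; rw [(hf x).deriv]; exact h0 x hxm
  have hmono : MonotoneOn f (Set.Icc a b) := by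
    apply monotoneOn_of_deriv_nonneg (convex_Icc a b) hc hdiff
    intro x hxm
    rw [interior_Icc] at hxm
    rw [hderiv x hxm]
  have hanti : AntitoneOn f (Set.Icc a b) := by
    apply antitoneOn_of_deriv_nonpos (convex_Icc a b) hc hdiff
    intro x hxm
    rw [interior_Icc] at hxm
    rw [hderiv x hxm]
  intro x hxm
  have hb : b ∈ Set.Icc a b := ⟨hab, le_refl b⟩
  exact le_antisymm (hmono hxm hb hxm.2) (hanti hxm hb hxm.2)

lemma maxprin (x₀ x₁ k : ℝ) (hx : x₀ < x₁) (hk : 0 < k)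
    (w w' w'' : ℝ → ℝ) (h1 : ∀ x, HasDerivAt w (w' x) x) (h2 : ∀ x, HasDerivAt w' (w'' x) x)
    (h0 : w x₀ = 0) (hb : w' x₁ = 0)
    (hineq : ∀ x ∈ Set.Ioo x₀ x₁, k ^ 2 * w x ≤ w'' x) :
    ∀ x ∈ Set.Icc x₀ x₁, w x ≤ 0 := by
  by_contra hcon
  push_neg at hcon
  obtain ⟨y, hy, hwy⟩ := hcon
  have hwc : ContinuousOn w (Set.Icc x₀ x₁) :=
    fun x _ => ((h1 x).continuousAt).continuousWithinAt
  obtain ⟨c, hc, hmax⟩ := isCompact_Icc.exists_isMaxOn (Set.nonempty_Icc.2 hx.le) hwc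
  have hm : 0 < w c := lt_of_lt_of_le hwy (hmax hy)
  have hc0 : x₀ < c := by
    rcases eq_or_lt_of_le hc.1 with h | h
    · exfalso; rw [← h, h0] at hm; exact lt_irrefl 0 hm
    · exact h
  have hw'c : w' c = 0 := by
    rcases eq_or_lt_of_le hc.2 with h | h
    · rw [h]; exact hb
    · exact (hmax.isLocalMax (Icc_mem_nhds hc0 h)).hasDerivAt_eq_zero (h1 c)
  -- h(x) = exp(k x) (w' x - k w x) is monotone on [x₀,x₁]
  set H := fun x => Real.exp (k * x) * (w' x - k * w x) with hHdef
  have hHd : ∀ x, HasDerivAt H (Real.exp (k * x) * (w'' x - k ^ 2 * w x)) x := by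
    intro x
    have e1 : HasDerivAt (fun x => Real.exp (k * x)) (k * Real.exp (k * x)) x := by
      have := (Real.hasDerivAt_exp (k * x)).comp x ((hasDerivAt_id x).const_mul k)
      simpa [mul_comm, Function.comp_def] using this
    have e2 : HasDerivAt (fun x => w' x - k * w x) (w'' x - k * w' x) x :=
      (h2 x).sub ((h1 x).const_mul k)
    have := e1.mul e2
    exact this.congr_deriv (by ring)
  have hHmono : MonotoneOn H (Set.Icc x₀ x₁) := by
    apply monotoneOn_of_deriv_nonneg (convex_Icc x₀ x₁)
      (fun x _ => ((hHd x).continuousAt).continuousWithinAt)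
      (fun x _ => ((hHd x).differentiableAt).differentiableWithinAt)
    intro x hxm
    rw [interior_Icc] at hxm
    rw [(hHd x).deriv]
    have := hineq x hxm
    have he := Real.exp_pos (k * x)
    nlinarith
  have hHc : H c < 0 := by
    rw [hHdef]
    simp only [hw'c]
    have : (0:ℝ) < Real.exp (k * c) * (k * w c) := by positivity
    nlinarith
  -- g(x) = exp(-(k x)) w x strictly decreasing on [x₀, c]
  set G := fun x => Real.exp (-(k * x)) * w x with hGdef
  have hGd : ∀ x, HasDerivAt G (Real.exp (-(k * x)) * (w' x - k * w x)) x := by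
    intro x
    have e1 : HasDerivAt (fun x => Real.exp (-(k * x))) (-k * Real.exp (-(k * x))) x := by
      have := (Real.hasDerivAt_exp (-(k * x))).comp x
        (((hasDerivAt_id x).const_mul k).neg)
      simpa [mul_comm, Function.comp_def] using this
    have := e1.mul (h1 x)
    exact this.congr_deriv (by ring)
  have hGanti : StrictAntiOn G (Set.Icc x₀ c) := by
    apply strictAntiOn_of_deriv_neg (convex_Icc x₀ c)
      (fun x _ => ((hGd x).continuousAt).continuousWithinAt)
    intro x hxm
    rw [interior_Icc] at hxm
    rw [(hGd x).deriv]
    have hxI : x ∈ Set.Icc x₀ x₁ := ⟨hxm.1.le, hxm.2.le.trans hc.2⟩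
    have hHx : H x ≤ H c := hHmono hxI hc hxm.2.le
    have hHx' : H x < 0 := lt_of_le_of_lt hHx hHc
    have hHx'' : Real.exp (k * x) * (w' x - k * w x) < 0 := hHx'
    have hexp : (0:ℝ) < Real.exp (k * x) := Real.exp_pos _
    have hneg : w' x - k * w x < 0 := by
      by_contra hcc
      push_neg at hcc
      nlinarith [hHx'']
    have : (0:ℝ) < Real.exp (-(k * x)) := Real.exp_pos _
    nlinarith
  have h1' : G x₀ > G c := hGanti ⟨le_refl x₀, hc0.le⟩ ⟨hc0.le, le_refl c⟩ hc0
  have : G x₀ = 0 := by rw [hGdef]; simp [h0]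
  rw [this] at h1'
  have : (0:ℝ) < G c := by
    rw [hGdef]
    positivity
  linarith

lemma odeval (x₀ x₁ k : ℝ) (hx : x₀ < x₁) (hk : 0 < k) (f f' f'' : ℝ → ℝ)
    (h1 : ∀ x, HasDerivAt f (f' x) x) (h2 : ∀ x, HasDerivAt f' (f'' x) x)
    (hsol : ∀ x ∈ Set.Ioo x₀ x₁, f'' x = k ^ 2 * f x) (hb : f' x₁ = 0) :
    ∀ x ∈ Set.Icc x₀ x₁, f x = f x₁ * Real.cosh (k * (x - x₁)) := by
  set D := fun x => f x - f x₁ * Real.cosh (k * (x - x₁)) with hDdef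
  set D' := fun x => f' x - f x₁ * (Real.sinh (k * (x - x₁)) * k) with hD'def
  set D'' := fun x => f'' x - f x₁ * (Real.cosh (k * (x - x₁)) * k * k) with hD''def
  have hlin : ∀ x : ℝ, HasDerivAt (fun x => k * (x - x₁)) k x := by
    intro x
    have := ((hasDerivAt_id x).sub_const x₁).const_mul k
    simpa using this
  have hD1 : ∀ x, HasDerivAt D (D' x) x := by
    intro x
    exact (h1 x).sub (((hlin x).cosh).const_mul (f x₁))
  have hD2 : ∀ x, HasDerivAt D' (D'' x) x := by
    intro x
    have : HasDerivAt (fun x => Real.sinh (k * (x - x₁)) * k)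
        (Real.cosh (k * (x - x₁)) * k * k) x := ((hlin x).sinh).mul_const k
    exact (h2 x).sub (this.const_mul (f x₁))
  have hD0 : D x₁ = 0 := by simp [hDdef]
  have hD'0 : D' x₁ = 0 := by simp [hD'def, hb]
  have hDode : ∀ x ∈ Set.Ioo x₀ x₁, D'' x = k ^ 2 * D x := by
    intro x hxm
    simp only [hD''def, hDdef, hsol x hxm]
    ring
  -- A = (D' + k D) exp(-(k x)) is constant
  set A := fun x => (D' x + k * D x) * Real.exp (-(k * x)) with hAdef
  have hexp1 : ∀ x : ℝ, HasDerivAt (fun x => Real.exp (-(k * x))) (-k * Real.exp (-(k * x))) x := by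
    intro x
    have := (Real.hasDerivAt_exp (-(k * x))).comp x (((hasDerivAt_id x).const_mul k).neg)
    simpa [mul_comm, Function.comp_def] using this
  have hA1 : ∀ x, HasDerivAt A ((D'' x + k * D' x) * Real.exp (-(k * x))
      + (D' x + k * D x) * (-k * Real.exp (-(k * x)))) x := by
    intro x
    exact ((hD2 x).add ((hD1 x).const_mul k)).mul (hexp1 x)
  have hA0 : ∀ x ∈ Set.Icc x₀ x₁, A x = 0 := by
    have := const_of_deriv_zero x₀ x₁ hx.le A _ hA1 ?_
    · intro x hxm
      rw [this x hxm, hAdef]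
      simp [hD0, hD'0]
    · intro x hxm
      rw [hDode x hxm]
      ring
  -- B = (D' - k D) exp(k x) is constant
  set B := fun x => (D' x - k * D x) * Real.exp (k * x) with hBdef
  have hexp2 : ∀ x : ℝ, HasDerivAt (fun x => Real.exp (k * x)) (k * Real.exp (k * x)) x := by
    intro x
    have := (Real.hasDerivAt_exp (k * x)).comp x ((hasDerivAt_id x).const_mul k)
    simpa [mul_comm, Function.comp_def] using this
  have hB1 : ∀ x, HasDerivAt B ((D'' x - k * D' x) * Real.exp (k * x)
      + (D' x - k * D x) * (k * Real.exp (k * x))) x := by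
    intro x
    exact ((hD2 x).sub ((hD1 x).const_mul k)).mul (hexp2 x)
  have hB0 : ∀ x ∈ Set.Icc x₀ x₁, B x = 0 := by
    have := const_of_deriv_zero x₀ x₁ hx.le B _ hB1 ?_
    · intro x hxm
      rw [this x hxm, hBdef]
      simp [hD0, hD'0]
    · intro x hxm
      rw [hDode x hxm]
      ring
  intro x hxm
  have hA := hA0 x hxm
  have hB := hB0 x hxm
  rw [hAdef] at hA
  rw [hBdef] at hB
  have e1 : (0:ℝ) < Real.exp (-(k * x)) := Real.exp_pos _
  have e2 : (0:ℝ) < Real.exp (k * x) := Real.exp_pos _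
  have hA' : D' x + k * D x = 0 := by
    rcases mul_eq_zero.mp hA with h | h
    · exact h
    · exact absurd h e1.ne'
  have hB' : D' x - k * D x = 0 := by
    rcases mul_eq_zero.mp hB with h | h
    · exact h
    · exact absurd h e2.ne'
  have : D x = 0 := by nlinarith
  have hDx : f x - f x₁ * Real.cosh (k * (x - x₁)) = 0 := this
  linarith

theorem stmt2 (x₀ x₁ μ ε : ℝ) (hx : x₀ < x₁) (hμ : 0 < μ) (hε : 0 < ε)
    (ψ ψ' ψ'' ψh ψh' ψh'' : ℝ → ℝ)
    (hψ1 : ∀ x, HasDerivAt ψ (ψ' x) x) (hψ2 : ∀ x, HasDerivAt ψ' (ψ'' x) x)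
    (hψh1 : ∀ x, HasDerivAt ψh (ψh' x) x) (hψh2 : ∀ x, HasDerivAt ψh' (ψh'' x) x)
    (hsub : ∀ x ∈ Set.Ioo x₀ x₁, 0 ≤ ψ'' x - μ ^ 2 / ε ^ 2 * ψ x)
    (hsol : ∀ x ∈ Set.Ioo x₀ x₁, ψh'' x - μ ^ 2 / ε ^ 2 * ψh x = 0)
    (hbc0 : ψ x₀ = ψh x₀) (hbc1 : ψ' x₁ = 0) (hbc1' : ψh' x₁ = 0)
    (hpos : ∀ x ∈ Set.Icc x₀ x₁, 0 ≤ ψ x) :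
    (∀ x ∈ Set.Icc x₀ x₁, ψ x ≤ ψh x) ∧
      ψ x₁ ≤ ψ x₀ / Real.cosh (μ * (x₁ - x₀) / ε) := by
  set k := μ / ε with hkdef
  have hk : 0 < k := div_pos hμ hε
  have hk2 : k ^ 2 = μ ^ 2 / ε ^ 2 := by rw [hkdef]; ring
  -- maximum principle applied to w = ψ - ψh
  have hle : ∀ x ∈ Set.Icc x₀ x₁, ψ x - ψh x ≤ 0 := by
    apply maxprin x₀ x₁ k hx hk (fun x => ψ x - ψh x) (fun x => ψ' x - ψh' x)
      (fun x => ψ'' x - ψh'' x)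
      (fun x => (hψ1 x).sub (hψh1 x)) (fun x => (hψ2 x).sub (hψh2 x))
      (by show ψ x₀ - ψh x₀ = 0; rw [hbc0]; ring)
      (by show ψ' x₁ - ψh' x₁ = 0; rw [hbc1, hbc1']; ring)
    intro x hxm
    have h1 := hsub x hxm
    have h2 := hsol x hxm
    rw [hk2]
    nlinarith
  constructor
  · intro x hxm
    linarith [hle x hxm]
  · have hode : ∀ x ∈ Set.Icc x₀ x₁, ψh x = ψh x₁ * Real.cosh (k * (x - x₁)) := by
      apply odeval x₀ x₁ k hx hk ψh ψh' ψh'' hψh1 hψh2 _ hbc1'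
      intro x hxm
      have := hsol x hxm
      rw [hk2]
      linarith
    have hval : ψh x₀ = ψh x₁ * Real.cosh (k * (x₀ - x₁)) :=
      hode x₀ ⟨le_refl x₀, hx.le⟩
    have hcosh_eq : Real.cosh (k * (x₀ - x₁)) = Real.cosh (μ * (x₁ - x₀) / ε) := by
      rw [show k * (x₀ - x₁) = -(μ * (x₁ - x₀) / ε) by rw [hkdef]; ring, Real.cosh_neg]
    have hcoshpos : 0 < Real.cosh (μ * (x₁ - x₀) / ε) := Real.cosh_pos _
    have hψh1' : ψh x₁ = ψ x₀ / Real.cosh (μ * (x₁ - x₀) / ε) := by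
      rw [hbc0, hval, hcosh_eq]
      field_simp
    have hψx1 : ψ x₁ ≤ ψh x₁ := by
      have := hle x₁ ⟨hx.le, le_refl x₁⟩
      linarith
    rw [hψh1'] at hψx1
    exact hψx1
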